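/- The assignment F ↦ span_ℝ{q_i : i ∉ [N]_F} is a bijection from the set of minimal faces of Π onto the set of relevant subspaces of ℝ^k; moreover, if the minimal face F corresponds to the relevant subspace H under this bijection, then [N]_F = {1,…,N} \ [N]_H. -/

import Mathlib

/-- `S` is `A_ℝ`-redundant: there exist `c i ≠ 0` for `i ∈ S` with `∑_{i ∈ S} c i • a i = 0`. -/
def ARedundant {N m : ℕ} (a : Fin N → (Fin m → ℝ)) (S : Set (Fin N)) : Prop :=
  ∃ c : Fin N → ℝ, (∀ i ∈ S, c i ≠ 0) ∧ (∀ i ∉ S, c i = 0) ∧ ∑ i, c i • a i = 0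

/-- `S` is `Q_ℝ`-saturated. -/
def QSaturated {N k : ℕ} (q : Fin N → (Fin k → ℝ)) (S : Set (Fin N)) : Prop :=
  ∃ l : (Fin k → ℝ) →ₗ[ℝ] ℝ, S = {i | l (q i) = 0}

/-- `S` is `Q_ℝ`-positively-redundant. -/
def QPosRedundant {N k : ℕ} (q : Fin N → (Fin k → ℝ)) (S : Set (Fin N)) : Prop :=
  ∃ c : Fin N → ℝ, (∀ i ∈ S, 0 < c i) ∧ (∀ i ∉ S, c i = 0) ∧ ∑ i, c i • q i = 0

/-- The polytope `Π = conv({0, a_1, …, a_N})`. -/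
def PolyPi {N m : ℕ} (a : Fin N → (Fin m → ℝ)) : Set (Fin m → ℝ) :=
  convexHull ℝ (insert 0 (Set.range a))

/-- A face of `Π` is `Π ∩ l⁻¹(0)` for a linear map `l` that is nonnegative on `Π`. -/
def IsFace {N m : ℕ} (a : Fin N → (Fin m → ℝ)) (F : Set (Fin m → ℝ)) : Prop :=
  ∃ l : (Fin m → ℝ) →ₗ[ℝ] ℝ, (∀ x ∈ PolyPi a, 0 ≤ l x) ∧ F = PolyPi a ∩ {x | l x = 0}

/-- `[N]_F = {i : a i ∈ F}`. -/
def faceIdx {N m : ℕ} (a : Fin N → (Fin m → ℝ)) (F : Set (Fin m → ℝ)) : Set (Fin N) :=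
  {i | a i ∈ F}

/-- `F` is a minimal face of `Π` if it is a face and `[N]_F` is `A_ℝ`-redundant. -/
def IsMinimalFace {N m : ℕ} (a : Fin N → (Fin m → ℝ)) (F : Set (Fin m → ℝ)) : Prop :=
  IsFace a F ∧ ARedundant a (faceIdx a F)

/-- `H` is weight-supported: `H = span_ℝ {q i : q i ∈ H}`. -/
def WeightSupported {N k : ℕ} (q : Fin N → (Fin k → ℝ)) (H : Submodule ℝ (Fin k → ℝ)) : Prop :=
  H = Submodule.span ℝ {v | ∃ i, q i = v ∧ v ∈ H}

/-- `[N]_H = {i : q i ∈ H}`. -/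
def subspIdx {N k : ℕ} (q : Fin N → (Fin k → ℝ)) (H : Submodule ℝ (Fin k → ℝ)) : Set (Fin N) :=
  {i | q i ∈ H}

/-- `H` is a relevant subspace: weight-supported and `[N]_H` is both
`Q_ℝ`-positively-redundant and `Q_ℝ`-saturated. -/
def IsRelevant {N k : ℕ} (q : Fin N → (Fin k → ℝ)) (H : Submodule ℝ (Fin k → ℝ)) : Prop :=
  WeightSupported q H ∧ QPosRedundant q (subspIdx q H) ∧ QSaturated q (subspIdx q H)

section GaleAux

variable {N k m : ℕ} {q : Fin N → (Fin k → ℝ)} {a : Fin N → (Fin m → ℝ)}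

/-- If `∑ cᵢ qᵢ = 0` then `c` comes from a linear functional on `ℝ^m` via `a`. -/
lemma gale_exists_dual
    (ha : Submodule.span ℝ (Set.range a) = ⊤)
    (hexact : ∀ c : Fin N → ℝ,
      (∑ i, c i • a i = 0) ↔ ∃ lam : Fin k → ℝ, ∀ i, c i = ∑ j, q i j * lam j)
    {c : Fin N → ℝ} (hc : ∑ i, c i • q i = 0) :
    ∃ l : (Fin m → ℝ) →ₗ[ℝ] ℝ, ∀ i, l (a i) = c i := by
  classical
  set A : (Fin N → ℝ) →ₗ[ℝ] (Fin m → ℝ) := Fintype.linearCombination ℝ a with hA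
  have hAsurj : LinearMap.range A = ⊤ := by
    rw [hA, Fintype.range_linearCombination, ha]
  obtain ⟨g, hg⟩ := A.exists_rightInverse_of_surjective hAsurj
  set cf : (Fin N → ℝ) →ₗ[ℝ] ℝ := Fintype.linearCombination ℝ c with hcf
  have hker : ∀ t : Fin N → ℝ, A t = 0 → cf t = 0 := by
    intro t ht
    rw [hA, Fintype.linearCombination_apply] at ht
    obtain ⟨lam, hlam⟩ := (hexact t).1 ht
    have h1 : cf t = ∑ i, ∑ j, q i j * lam j * c i := by
      rw [hcf, Fintype.linearCombination_apply]
      refine Finset.sum_congr rfl fun i _ => ?_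
      rw [smul_eq_mul, hlam i, Finset.sum_mul]
    rw [h1, Finset.sum_comm]
    refine Finset.sum_eq_zero fun j _ => ?_
    have h2 : (∑ i, c i • q i) j = 0 := by rw [hc]; rfl
    rw [Finset.sum_apply] at h2
    calc ∑ i, q i j * lam j * c i = (∑ i, c i * q i j) * lam j := by
          rw [Finset.sum_mul]; exact Finset.sum_congr rfl fun i _ => by ring
      _ = 0 := by
          simp only [Pi.smul_apply, smul_eq_mul] at h2
          rw [h2, zero_mul]
  refine ⟨cf ∘ₗ g, fun i => ?_⟩
  have h3 : A (g (a i) - Pi.single i 1) = 0 := by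
    rw [map_sub]
    have : A (g (a i)) = a i := by
      have := congrArg (fun f => f (a i)) hg
      simpa using this
    rw [this]
    rw [hA, Fintype.linearCombination_apply_single, one_smul, sub_self]
  have h4 := hker _ h3
  rw [map_sub] at h4
  have h5 : cf (Pi.single i 1) = c i := by
    rw [hcf, Fintype.linearCombination_apply_single, smul_eq_mul, one_mul]
  have := sub_eq_zero.mp h4
  simp only [LinearMap.comp_apply]
  rw [this, h5]

/-- For any functional `l` on `ℝ^m`, `∑ l(aᵢ) qᵢ = 0`. -/
lemma gale_sum_smul_q
    (hexact : ∀ c : Fin N → ℝ,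
      (∑ i, c i • a i = 0) ↔ ∃ lam : Fin k → ℝ, ∀ i, c i = ∑ j, q i j * lam j)
    (l : (Fin m → ℝ) →ₗ[ℝ] ℝ) : ∑ i, l (a i) • q i = 0 := by
  classical
  funext j
  have hc : ∑ i, (q i j) • a i = 0 := by
    refine (hexact fun i => q i j).2 ⟨Pi.single j 1, fun i => ?_⟩
    simp [Pi.single_apply, mul_ite, Finset.sum_ite_eq]
  have := congrArg l hc
  rw [map_sum, map_zero] at this
  simp only [map_smul, smul_eq_mul] at this
  rw [Finset.sum_apply]
  simp only [Pi.smul_apply, smul_eq_mul, Pi.zero_apply]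
  rw [← this]
  exact Finset.sum_congr rfl fun i _ => mul_comm _ _

lemma gale_mem_polyPi (i : Fin N) : a i ∈ PolyPi a :=
  subset_convexHull ℝ _ (Set.mem_insert_of_mem _ ⟨i, rfl⟩)

lemma gale_zero_mem_polyPi : (0 : Fin m → ℝ) ∈ PolyPi a :=
  subset_convexHull ℝ _ (Set.mem_insert _ _)

lemma gale_faceIdx (l : (Fin m → ℝ) →ₗ[ℝ] ℝ) :
    faceIdx a (PolyPi a ∩ {x | l x = 0}) = {i | l (a i) = 0} := by
  ext i
  simp only [faceIdx, Set.mem_setOf_eq, Set.mem_inter_iff]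
  exact ⟨fun h => h.2, fun h => ⟨gale_mem_polyPi i, h⟩⟩

lemma gale_face_reconstruct (l : (Fin m → ℝ) →ₗ[ℝ] ℝ) (hl : ∀ x ∈ PolyPi a, 0 ≤ l x) :
    PolyPi a ∩ {x | l x = 0} = convexHull ℝ (insert 0 (a '' {i | l (a i) = 0})) := by
  classical
  apply Set.Subset.antisymm
  · rintro x ⟨hxP, hx0⟩
    rw [Set.mem_setOf_eq] at hx0
    rw [PolyPi, mem_convexHull_iff_exists_fintype] at hxP
    obtain ⟨ι, _, w, z, hw0, hw1, hz, hsum⟩ := hxP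
    have hzP : ∀ i, z i ∈ PolyPi a := fun i => subset_convexHull ℝ _ (hz i)
    have hsum0 : ∑ i, w i * l (z i) = 0 := by
      have := congrArg l hsum
      rw [map_sum] at this
      simp only [map_smul, smul_eq_mul] at this
      rw [this, hx0]
    have hzero : ∀ i, w i * l (z i) = 0 := by
      intro i
      exact (Finset.sum_eq_zero_iff_of_nonneg fun i _ =>
        mul_nonneg (hw0 i) (hl _ (hzP i))).1 hsum0 i (Finset.mem_univ i)
    set z' : ι → (Fin m → ℝ) := fun i => if l (z i) = 0 then z i else 0 with hz'
    refine mem_convexHull_of_exists_fintype w z' hw0 hw1 (fun i => ?_) ?_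
    · by_cases hi : l (z i) = 0
      · simp only [hz', if_pos hi]
        rcases hz i with h0 | ⟨j, hj⟩
        · rw [← h0]; exact Set.mem_insert _ _
        · refine Set.mem_insert_of_mem _ ⟨j, ?_, hj⟩
          rw [Set.mem_setOf_eq, hj, hi]
      · simp only [hz', if_neg hi]
        exact Set.mem_insert _ _
    · rw [← hsum]
      refine Finset.sum_congr rfl fun i _ => ?_
      by_cases hi : l (z i) = 0
      · simp [hz', if_pos hi]
      · have hwi : w i = 0 := by
          rcases mul_eq_zero.mp (hzero i) with h | h
          · exact h
          · exact absurd h hi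
        simp [hwi]
  · apply convexHull_min
    · rintro v (rfl | ⟨i, hi, rfl⟩)
      · exact ⟨gale_zero_mem_polyPi, by simp⟩
      · exact ⟨gale_mem_polyPi i, hi⟩
    · exact (convex_convexHull ℝ _).inter (convex_hyperplane l.isLinear 0)

end GaleAux
section GaleMain

variable {N k m : ℕ} {q : Fin N → (Fin k → ℝ)} {a : Fin N → (Fin m → ℝ)}

/-- Forward direction: the span associated to a minimal face is relevant, the index sets
are complementary, and the face is reconstructed from its index set. -/
lemma gale_forward
    (hexact : ∀ c : Fin N → ℝ,
      (∑ i, c i • a i = 0) ↔ ∃ lam : Fin k → ℝ, ∀ i, c i = ∑ j, q i j * lam j)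
    {F : Set (Fin m → ℝ)} (hF : IsMinimalFace a F) :
    IsRelevant q (Submodule.span ℝ (q '' (faceIdx a F)ᶜ)) ∧
      faceIdx a F = (subspIdx q (Submodule.span ℝ (q '' (faceIdx a F)ᶜ)))ᶜ ∧
      F = convexHull ℝ (insert 0 (a '' faceIdx a F)) := by
  classical
  obtain ⟨⟨l, hl, rfl⟩, d, hd1, hd2, hd3⟩ := hF
  set S : Set (Fin N) := faceIdx a (PolyPi a ∩ {x | l x = 0}) with hSdef
  have hS : S = {i | l (a i) = 0} := gale_faceIdx l
  set H : Submodule ℝ (Fin k → ℝ) := Submodule.span ℝ (q '' Sᶜ) with hHdef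
  -- the functional witnessing redundancy
  obtain ⟨lam, hlam⟩ := (hexact d).1 hd3
  set lk : (Fin k → ℝ) →ₗ[ℝ] ℝ := Fintype.linearCombination ℝ lam with hlk
  have hlkq : ∀ i, lk (q i) = d i := by
    intro i
    rw [hlk, Fintype.linearCombination_apply, hlam i]
    exact Finset.sum_congr rfl fun j _ => rfl
  -- key: subspIdx q H = Sᶜ
  have hmem : ∀ i, i ∈ Sᶜ → q i ∈ H := fun i hi =>
    Submodule.subset_span ⟨i, hi, rfl⟩
  have hkerlk : H ≤ LinearMap.ker lk := by
    rw [hHdef]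
    refine Submodule.span_le.2 ?_
    rintro v ⟨i, hi, rfl⟩
    rw [SetLike.mem_coe, LinearMap.mem_ker, hlkq]
    exact hd2 i hi
  have hkey : subspIdx q H = Sᶜ := by
    ext i
    constructor
    · intro hi
      intro hiS
      have h0 : lk (q i) = 0 := hkerlk hi
      rw [hlkq] at h0
      exact hd1 i hiS h0
    · exact hmem i
  have hrec : PolyPi a ∩ {x | l x = 0} = convexHull ℝ (insert 0 (a '' S)) := by
    rw [hS]; exact gale_face_reconstruct l hl
  refine ⟨⟨?_, ?_, ?_⟩, ?_, hrec⟩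
  · -- weight supported
    rw [WeightSupported]
    apply le_antisymm
    · rw [hHdef]
      refine Submodule.span_le.2 (Set.Subset.trans ?_ Submodule.subset_span)
      rintro v ⟨i, hi, rfl⟩
      exact ⟨i, rfl, hmem i hi⟩
    · refine Submodule.span_le.2 ?_
      rintro v ⟨i, rfl, hv⟩
      exact hv
  · -- QPosRedundant
    rw [hkey]
    refine ⟨fun i => l (a i), fun i hi => ?_, fun i hi => ?_, gale_sum_smul_q hexact l⟩
    · refine lt_of_le_of_ne (hl _ (gale_mem_polyPi i)) ?_
      intro h0
      refine hi ?_
      rw [hS]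
      exact h0.symm
    · have hiS : i ∈ S := Set.notMem_compl_iff.mp hi
      rw [hS] at hiS
      exact hiS
  · -- QSaturated
    rw [hkey]
    refine ⟨lk, ?_⟩
    ext i
    rw [Set.mem_compl_iff, Set.mem_setOf_eq, hlkq]
    constructor
    · intro hi
      exact hd2 i hi
    · intro h0 hiS
      exact hd1 i hiS h0
  · rw [hkey, compl_compl]

end GaleMain

/-- The assignment `F ↦ span_ℝ {q i : i ∉ [N]_F}` is a bijection from minimal faces of `Π`
onto relevant subspaces of `ℝ^k`; moreover under this bijection `[N]_F = [N]_Hᶜ`. -/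
theorem minimalFace_relevant_bijection
    {N k m : ℕ} (hN : 1 ≤ N)
    (q : Fin N → (Fin k → ℝ)) (a : Fin N → (Fin m → ℝ))
    (hq : Submodule.span ℝ (Set.range q) = ⊤)
    (ha : Submodule.span ℝ (Set.range a) = ⊤)
    (hexact : ∀ c : Fin N → ℝ,
      (∑ i, c i • a i = 0) ↔ ∃ lam : Fin k → ℝ, ∀ i, c i = ∑ j, q i j * lam j) :
    Set.BijOn (fun F : Set (Fin m → ℝ) => Submodule.span ℝ (q '' (faceIdx a F)ᶜ))
        {F | IsMinimalFace a F} {H | IsRelevant q H} ∧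
      ∀ F, IsMinimalFace a F →
        faceIdx a F = (subspIdx q (Submodule.span ℝ (q '' (faceIdx a F)ᶜ)))ᶜ := by
  classical
  refine ⟨⟨fun F hF => (gale_forward hexact hF).1, ?_, ?_⟩,
    fun F hF => (gale_forward hexact hF).2.1⟩
  · -- injective
    intro F1 h1 F2 h2 heq
    simp only at heq
    have hidx : faceIdx a F1 = faceIdx a F2 := by
      rw [(gale_forward hexact h1).2.1, (gale_forward hexact h2).2.1, heq]
    rw [(gale_forward hexact h1).2.2, (gale_forward hexact h2).2.2, hidx]
  · -- surjective
    intro H hH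
    obtain ⟨hws, ⟨c, hcpos, hczero, hcsum⟩, lk, hlk⟩ := hH
    set T : Set (Fin N) := subspIdx q H with hT
    obtain ⟨l, hlc⟩ := gale_exists_dual ha hexact hcsum
    have hcnn : ∀ i, 0 ≤ c i := by
      intro i
      by_cases hi : i ∈ T
      · exact (hcpos i hi).le
      · rw [hczero i hi]
    have hl : ∀ x ∈ PolyPi a, 0 ≤ l x := by
      intro x hx
      have hsub : PolyPi a ⊆ {x | 0 ≤ l x} := by
        apply convexHull_min ?_ (convex_halfSpace_ge l.isLinear 0)
        rintro v (rfl | ⟨i, rfl⟩)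
        · simp
        · rw [Set.mem_setOf_eq, hlc i]; exact hcnn i
      exact hsub hx
    set F : Set (Fin m → ℝ) := PolyPi a ∩ {x | l x = 0} with hF
    have hidx : faceIdx a F = Tᶜ := by
      rw [hF, gale_faceIdx l]
      ext i
      rw [Set.mem_setOf_eq, hlc i, Set.mem_compl_iff]
      constructor
      · intro h0 hiT
        exact (hcpos i hiT).ne' h0
      · intro hiT
        exact hczero i hiT
    have hmin : IsMinimalFace a F := by
      refine ⟨⟨l, hl, hF⟩, fun i => lk (q i), ?_, ?_, ?_⟩
      · intro i hi
        rw [hidx] at hi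
        intro h0
        refine hi ?_
        rw [hlk]
        exact h0
      · intro i hi
        rw [hidx] at hi
        have hiT : i ∈ T := Set.notMem_compl_iff.mp hi
        rw [hlk] at hiT
        exact hiT
      · refine (hexact _).2 ⟨fun j => lk (Pi.single j 1), fun i => ?_⟩
        conv_lhs => rw [← Finset.univ_sum_single (q i)]
        rw [map_sum]
        refine Finset.sum_congr rfl fun j _ => ?_
        have : Pi.single j (q i j) = q i j • (Pi.single j 1 : Fin k → ℝ) := by
          rw [← Pi.single_smul, smul_eq_mul, mul_one]
        rw [this, map_smul, smul_eq_mul]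
    refine ⟨F, hmin, ?_⟩
    simp only
    rw [hidx, compl_compl]
    apply le_antisymm
    · refine Submodule.span_le.2 ?_
      rintro v ⟨i, hi, rfl⟩
      exact hi
    · nth_rewrite 1 [hws]
      refine Submodule.span_le.2 ?_
      rintro v ⟨i, rfl, hv⟩
      exact Submodule.subset_span ⟨i, hv, rfl⟩
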